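/- Every sufficiently long factor (length ≥ 15) of any infinite word in {010100110011, 0101001100110011}^ω has an abelian border of length at most 14. In particular, there exists an aperiodic infinite word all of whose factors of length at least 15 are abelian bordered. -/

import Mathlib

def factor {α : Type*} (w : ℕ → α) (i n : ℕ) : List α :=
  (List.range n).map (fun k => w (i + k))

def AbelianEquiv {α : Type*} [DecidableEq α] (u v : List α) : Prop :=
  ∀ a : α, u.count a = v.count a

/-- `u` has an abelian border of length `k`. -/
def HasAbelianBorderOfLength {α : Type*} [DecidableEq α] (u : List α) (k : ℕ) : Prop :=
  0 < k ∧ k < u.length ∧ AbelianEquiv (u.take k) (u.drop (u.length - k))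

def AbelianBordered {α : Type*} [DecidableEq α] (u : List α) : Prop :=
  ∃ k, HasAbelianBorderOfLength u k

/-- The block `x = 010100110011`. -/
def x12 : List ℕ := [0,1,0,1,0,0,1,1,0,0,1,1]

/-- The block `y = 0101001100110011`. -/
def y12 : List ℕ := [0,1,0,1,0,0,1,1,0,0,1,1,0,0,1,1]

/-- The prefix consisting of the first `n` blocks chosen according to `c`. -/
def pre12 (c : ℕ → Bool) : ℕ → List ℕ
  | 0 => []
  | n + 1 => pre12 c n ++ (if c n then y12 else x12)

/-- `w` is an infinite concatenation of copies of `x12` and `y12`. -/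
def WordIn12 (w : ℕ → ℕ) : Prop :=
  ∃ c : ℕ → Bool, ∀ n, factor w 0 (pre12 c n).length = pre12 c n

def UltimatelyPeriodic {α : Type*} (w : ℕ → α) : Prop :=
  ∃ p N, 0 < p ∧ ∀ n, N ≤ n → w (n + p) = w n

/-! ### auxiliary -/

def S12 : List (List ℕ) :=
  ([x12 ++ x12, x12 ++ y12, y12 ++ x12, y12 ++ y12].map (· ++ [0,1])).flatMap
    (fun L => (List.range (L.length - 13)).map (fun j => (L.drop j).take 14))

set_option maxRecDepth 100000 in
lemma core12 : ∀ u ∈ S12, ∀ v ∈ S12,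
    ∃ k < 15, 0 < k ∧ (u.take k).count 1 = (v.drop (14-k)).count 1
      ∧ (u.take k).count 0 = (v.drop (14-k)).count 0 := by decide

set_option maxRecDepth 100000 in
lemma S12_binary : ∀ u ∈ S12, ∀ z ∈ u, z = 0 ∨ z = 1 := by decide

lemma factor_length (w : ℕ → ℕ) (i n : ℕ) : (factor w i n).length = n := by
  simp [factor]

lemma factor_take (w : ℕ → ℕ) (i : ℕ) {k n : ℕ} (h : k ≤ n) :
    (factor w i n).take k = factor w i k := by
  apply List.ext_getElem
  · simp [factor]; omega
  · intro j h1 h2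
    simp [factor]

lemma factor_drop (w : ℕ → ℕ) (i m n : ℕ) :
    (factor w i n).drop m = factor w (i + m) (n - m) := by
  apply List.ext_getElem
  · simp [factor]
  · intro j h1 h2
    simp [factor]
    congr 1
    omega

lemma window_prefix {l l' : List ℕ} {m i : ℕ} (h : l.take m = l'.take m) (him : i + 14 ≤ m) :
    (l.drop i).take 14 = (l'.drop i).take 14 := by
  have h1 : ∀ t : List ℕ, (t.drop i).take 14 = ((t.take m).drop i).take 14 := by
    intro t
    rw [List.drop_take, List.take_take]
    congr 1
    omega
  rw [h1 l, h1 l', h]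

lemma pair_window_mem (b1 b2 : List ℕ) (h1 : b1 = x12 ∨ b1 = y12) (h2 : b2 = x12 ∨ b2 = y12)
    (j : ℕ) (hj : j + 14 ≤ b1.length + b2.length + 2) :
    ((b1 ++ (b2 ++ [0,1])).drop j).take 14 ∈ S12 := by
  have hL : b1 ++ (b2 ++ [0,1]) ∈
      [x12 ++ x12, x12 ++ y12, y12 ++ x12, y12 ++ y12].map (· ++ [0,1]) := by
    rcases h1 with rfl|rfl <;> rcases h2 with rfl|rfl <;> simp [List.append_assoc]
  refine List.mem_flatMap.mpr ⟨_, hL, List.mem_map.mpr ⟨j, List.mem_range.mpr ?_, rfl⟩⟩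
  have : (b1 ++ (b2 ++ [0,1])).length = b1.length + b2.length + 2 := by
    simp [List.length_append]
    omega
  omega

lemma take_two_blk {b : List ℕ} (hb : b = x12 ∨ b = y12) (s : List ℕ) :
    (b ++ s).take 2 = [0,1] := by
  rcases hb with rfl|rfl <;> rfl

lemma prefix_agree (a s s' : List ℕ) (h : s.take 2 = s'.take 2) :
    (a ++ s).take (a.length + 2) = (a ++ s').take (a.length + 2) := by
  have h2 : a.length + 2 - a.length = 2 := by omega
  rw [List.take_append, List.take_append, h2, h]

lemma blk_or (c : ℕ → Bool) (n : ℕ) :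
    (if c n then y12 else x12) = x12 ∨ (if c n then y12 else x12) = y12 := by
  cases c n <;> simp

lemma blk_len_ge (b : List ℕ) (hb : b = x12 ∨ b = y12) : 12 ≤ b.length := by
  rcases hb with rfl|rfl <;> simp [x12, y12]

lemma pre12_windows_mem (c : ℕ → Bool) :
    ∀ n (b : List ℕ), (b = x12 ∨ b = y12) → ∀ i,
      i + 14 ≤ (pre12 c n).length + b.length + 2 →
      (((pre12 c n ++ (b ++ [0,1])).drop i).take 14) ∈ S12 := by
  intro n
  induction n with
  | zero =>
    intro b hb i hi
    have hpre : pre12 c 0 = [] := rfl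
    rw [hpre] at hi ⊢
    simp only [List.nil_append, List.length_nil, Nat.zero_add] at hi ⊢
    have hagree : (b ++ [0,1]).take (b.length + 2) = (b ++ (x12 ++ [0,1])).take (b.length + 2) := by
      apply prefix_agree
      rw [take_two_blk (Or.inl rfl) [0,1]]
      rfl
    rw [window_prefix hagree hi]
    exact pair_window_mem b x12 hb (Or.inl rfl) i (by omega)
  | succ n ih =>
    intro b hb i hi
    have hpre : pre12 c (n+1) = pre12 c n ++ (if c n then y12 else x12) := rfl
    set blk := (if c n then y12 else x12) with hblkdef
    have hblk : blk = x12 ∨ blk = y12 := blk_or c n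
    have hblklen : 12 ≤ blk.length := blk_len_ge blk hblk
    have hlen1 : (pre12 c (n+1)).length = (pre12 c n).length + blk.length := by
      rw [hpre]; simp
    rw [hpre, List.append_assoc]
    by_cases hcase : i + 14 ≤ (pre12 c n).length + blk.length + 2
    · have hagree : (pre12 c n ++ (blk ++ (b ++ [0,1]))).take ((pre12 c n).length + blk.length + 2)
          = (pre12 c n ++ (blk ++ [0,1])).take ((pre12 c n).length + blk.length + 2) := by
        have e1 : pre12 c n ++ (blk ++ (b ++ [0,1])) = (pre12 c n ++ blk) ++ (b ++ [0,1]) := by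
          rw [List.append_assoc]
        have e2 : pre12 c n ++ (blk ++ [0,1]) = (pre12 c n ++ blk) ++ [0,1] := by
          rw [List.append_assoc]
        have e3 : (pre12 c n).length + blk.length = (pre12 c n ++ blk).length := by simp
        rw [e1, e2, e3]
        apply prefix_agree
        rw [take_two_blk hb [0,1]]
        rfl
      rw [window_prefix hagree hcase]
      exact ih blk hblk i hcase
    · have hip : (pre12 c n).length ≤ i := by omega
      rw [List.drop_append, List.drop_eq_nil_of_le hip, List.nil_append]
      have := pair_window_mem blk b hblk hb (i - (pre12 c n).length) (by rw [hlen1] at hi; omega)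
      exact this

lemma pre12_window_mem (c : ℕ → Bool) (n i : ℕ) (h : i + 14 ≤ (pre12 c n).length) :
    (((pre12 c n).drop i).take 14) ∈ S12 := by
  have hagree : (pre12 c n).take (pre12 c n).length
      = (pre12 c n ++ (x12 ++ [0,1])).take (pre12 c n).length := by
    rw [List.take_length, List.take_append, Nat.sub_self, List.take_zero,
      List.append_nil, List.take_length]
  rw [window_prefix hagree h]
  exact pre12_windows_mem c n x12 (Or.inl rfl) i (by omega)

lemma pre12_len_ge (c : ℕ → Bool) (n : ℕ) : 12 * n ≤ (pre12 c n).length := by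
  induction n with
  | zero => simp
  | succ n ih =>
    have : (pre12 c (n+1)).length = (pre12 c n).length + (if c n then y12 else x12).length := by
      show (pre12 c n ++ _).length = _
      simp
    have h2 : 12 ≤ (if c n then y12 else x12).length := blk_len_ge _ (blk_or c n)
    omega

lemma factor_window {w : ℕ → ℕ} {c : ℕ → Bool}
    (hc : ∀ n, factor w 0 (pre12 c n).length = pre12 c n)
    (n j L : ℕ) (h : j + L ≤ (pre12 c n).length) :
    factor w j L = ((pre12 c n).drop j).take L := by
  conv_rhs => rw [← hc n]
  rw [factor_drop, factor_take w _ (by omega : L ≤ (pre12 c n).length - j)]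
  simp

lemma abelian_of_counts {u v : List ℕ} (hu : ∀ z ∈ u, z = 0 ∨ z = 1) (hv : ∀ z ∈ v, z = 0 ∨ z = 1)
    (h0 : u.count 0 = v.count 0) (h1 : u.count 1 = v.count 1) : AbelianEquiv u v := by
  intro a
  by_cases ha0 : a = 0
  · subst ha0; exact h0
  by_cases ha1 : a = 1
  · subst ha1; exact h1
  rw [List.count_eq_zero.mpr, List.count_eq_zero.mpr]
  · intro hmem; rcases hv a hmem with h|h <;> contradiction
  · intro hmem; rcases hu a hmem with h|h <;> contradiction

lemma part1 : ∀ w : ℕ → ℕ, WordIn12 w → ∀ i n, 15 ≤ n →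
    ∃ k, k ≤ 14 ∧ HasAbelianBorderOfLength (factor w i n) k := by
  rintro w ⟨c, hc⟩ i n h15
  obtain ⟨m, hm⟩ : ∃ m, i + n ≤ (pre12 c m).length :=
    ⟨i + n, le_trans (by omega) (pre12_len_ge c (i + n))⟩
  have hu : factor w i 14 ∈ S12 := by
    rw [factor_window hc m i 14 (by omega)]
    exact pre12_window_mem c m i (by omega)
  have hv : factor w (i + (n - 14)) 14 ∈ S12 := by
    rw [factor_window hc m _ 14 (by omega)]
    exact pre12_window_mem c m _ (by omega)
  obtain ⟨k, hk15, hk0, hc1, hc0⟩ := core12 _ hu _ hv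
  refine ⟨k, by omega, hk0, ?_, ?_⟩
  · rw [factor_length]; omega
  · simp only [factor_length]
    have e1 : (factor w i n).take k = (factor w i 14).take k := by
      rw [factor_take w i (by omega : k ≤ n), factor_take w i (by omega : k ≤ 14)]
    have e2 : (factor w i n).drop (n - k) = (factor w (i + (n - 14)) 14).drop (14 - k) := by
      rw [factor_drop, factor_drop]
      congr 1 <;> omega
    rw [e1, e2]
    exact abelian_of_counts
      (fun z hz => S12_binary _ hu z (List.mem_of_mem_take hz))
      (fun z hz => S12_binary _ hv z (List.mem_of_mem_drop hz)) hc0 hc1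

/-! ### Part 2 : aperiodic word -/

def c12 : ℕ → Bool := fun n => decide (∃ k ≤ n, 2 ^ k = n)

def w12 : ℕ → ℕ := fun m => (pre12 c12 (m + 1)).getD m 0

def pos12 (n : ℕ) : ℕ := (pre12 c12 n).length

lemma pre12_prefix (c : ℕ → Bool) : ∀ {n n' : ℕ}, n ≤ n' → pre12 c n <+: pre12 c n' := by
  intro n n' h
  induction n' with
  | zero =>
    have : n = 0 := by omega
    subst this; exact List.prefix_rfl
  | succ n' ih =>
    rcases Nat.lt_or_ge n (n'+1) with h'|h'
    · exact (ih (by omega)).trans ⟨_, rfl⟩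
    · have : n = n' + 1 := by omega
      subst this; exact List.prefix_rfl

lemma pre12_len_lt (m : ℕ) : m < (pre12 c12 (m+1)).length :=
  lt_of_lt_of_le (by omega) (pre12_len_ge c12 (m+1))

lemma w12_eq (n m : ℕ) (h : m < (pre12 c12 n).length) : w12 m = (pre12 c12 n)[m] := by
  unfold w12
  rw [List.getD_eq_getElem _ _ (pre12_len_lt m)]
  rcases le_total (m+1) n with hle | hle
  · exact (pre12_prefix c12 hle).getElem (pre12_len_lt m)
  · exact ((pre12_prefix c12 hle).getElem h).symm

lemma word_in_w12 : ∀ n, factor w12 0 (pre12 c12 n).length = pre12 c12 n := by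
  intro n
  apply List.ext_getElem
  · simp [factor]
  · intro j h1 h2
    simp only [factor, List.getElem_map, List.getElem_range, Nat.zero_add]
    exact w12_eq n j h2

lemma blk_content (n t : ℕ) (b : List ℕ) (hb : pre12 c12 (n+1) = pre12 c12 n ++ b)
    (ht : t < b.length) :
    w12 (pos12 n + t) = b[t] := by
  have hlt : pos12 n + t < (pre12 c12 (n+1)).length := by
    rw [hb]; simp [pos12]; omega
  rw [w12_eq (n+1) _ hlt]
  have : (pre12 c12 (n+1))[pos12 n + t]'hlt = (pre12 c12 n ++ b)[pos12 n + t]'(by rw [← hb]; exact hlt) := by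
    congr 1
  rw [this, List.getElem_append_right (by simp [pos12] : (pre12 c12 n).length ≤ pos12 n + t)]
  congr 1
  simp [pos12]

lemma pos12_step_false {n : ℕ} (h : c12 n = false) : pos12 (n+1) = pos12 n + 12 := by
  have : pre12 c12 (n+1) = pre12 c12 n ++ x12 := by
    show pre12 c12 n ++ _ = _
    rw [h]; simp
  unfold pos12
  rw [this]
  simp [x12]

lemma run_x (n m : ℕ) (hrun : ∀ j < m, c12 (n + j) = false) :
    ∀ j < m, ∀ t, (ht : t < 12) → w12 (pos12 n + (12 * j + t)) = x12[t]'(by simp [x12]; omega) := by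
  have hpos : ∀ j, j ≤ m → pos12 (n + j) = pos12 n + 12 * j := by
    intro j
    induction j with
    | zero => simp
    | succ j ih =>
      intro hj
      have hc := hrun j (by omega)
      have e : n + (j + 1) = (n + j) + 1 := by omega
      rw [e, pos12_step_false hc, ih (by omega)]
      ring
  intro j hj t ht
  have hb : pre12 c12 ((n+j)+1) = pre12 c12 (n+j) ++ x12 := by
    show pre12 c12 (n+j) ++ _ = _
    rw [hrun j hj]; simp
  have hbc := blk_content (n+j) t x12 hb (by simp [x12]; omega)
  rw [hpos j (le_of_lt hj)] at hbc
  rw [← hbc]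
  congr 1
  omega

lemma run_per (n m u : ℕ) (hrun : ∀ j < m, c12 (n + j) = false) (hu : u + 13 ≤ 12 * m) :
    w12 (pos12 n + u + 12) = w12 (pos12 n + u) := by
  obtain ⟨j, t, ht, hjt⟩ : ∃ j t, t < 12 ∧ u = 12 * j + t :=
    ⟨u / 12, u % 12, Nat.mod_lt _ (by omega), by omega⟩
  have hj1 : j + 1 < m := by omega
  have hj : j < m := by omega
  have e1 : pos12 n + u + 12 = pos12 n + (12 * (j+1) + t) := by omega
  have e2 : pos12 n + u = pos12 n + (12 * j + t) := by omega
  rw [e1, e2, run_x n m hrun (j+1) hj1 t ht, run_x n m hrun j hj t ht]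

lemma c12_pow (k : ℕ) : c12 (2 ^ k) = true := by
  unfold c12
  rw [decide_eq_true_iff]
  exact ⟨k, le_of_lt (Nat.lt_two_pow_self (n := k)), rfl⟩

lemma c12_between {K t : ℕ} (h1 : 2 ^ K < t) (h2 : t < 2 ^ (K+1)) : c12 t = false := by
  unfold c12
  rw [decide_eq_false_iff_not]
  rintro ⟨j, hj, rfl⟩
  rcases le_or_gt j K with h|h
  · have h2 : 2 ^ j ≤ 2 ^ K := Nat.pow_le_pow_right (by norm_num) h
    omega
  · have h2 : 2 ^ (K+1) ≤ 2 ^ j := Nat.pow_le_pow_right (by norm_num) h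
    omega

lemma run_exists (M L : ℕ) : ∃ n m, M ≤ pos12 n ∧ L + 25 ≤ 12 * m ∧
    ∀ j < m, c12 (n + j) = false := by
  set K := M + L + 38 with hK
  have h2K : K < 2 ^ K := Nat.lt_two_pow_self (n := K)
  refine ⟨2 ^ K + 1, 2 ^ K - 1, ?_, by omega, ?_⟩
  · calc M ≤ 2 ^ K + 1 := by omega
      _ ≤ 12 * (2 ^ K + 1) := by omega
      _ ≤ pos12 (2 ^ K + 1) := pre12_len_ge c12 _
  · intro j hj
    apply c12_between (K := K)
    · omega
    · have : 2 ^ (K+1) = 2 * 2 ^ K := by ring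
      omega

set_option maxHeartbeats 1000000 in
lemma per12_reduce (p N : ℕ) (hp : 0 < p) (hper : ∀ q, N ≤ q → w12 (q + p) = w12 q) :
    ∀ q, N ≤ q → w12 (q + 12) = w12 q := by
  have hper_k : ∀ k q, N ≤ q → w12 (q + k * p) = w12 q := by
    intro k
    induction k with
    | zero => simp
    | succ k ih =>
      intro q hq
      have e : q + (k+1) * p = (q + k * p) + p := by ring
      rw [e, hper _ (by omega), ih q hq]
  intro q hq
  obtain ⟨n, m, hM, hL, hrun⟩ := run_exists q p
  set D := pos12 n - q with hD
  set e := D / p with he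
  have hr : D % p < p := Nat.mod_lt _ hp
  have hdm : p * e + D % p = D := Nat.div_add_mod D p
  set ep := p * e with hep
  have hmul : (e + 1) * p = ep + p := by rw [hep]; ring
  have h1 := hper_k (e + 1) q hq
  have h2 := hper_k (e + 1) (q + 12) (by omega)
  rw [hmul] at h1 h2
  set u := q + (ep + p) - pos12 n with hu
  have hqeq : q + (ep + p) = pos12 n + u := by omega
  have hu13 : u + 13 ≤ 12 * m := by omega
  have h3 := run_per n m u hrun hu13
  have e1 : q + 12 + (ep + p) = pos12 n + u + 12 := by omega
  rw [e1, h3, ← hqeq, h1] at h2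
  exact h2.symm

lemma y12_vals : y12[1]'(by simp [y12]) = 1 ∧ y12[13]'(by simp [y12]) = 0 := by
  constructor <;> rfl

lemma w12_not_periodic : ¬ UltimatelyPeriodic w12 := by
  rintro ⟨p, N, hp, hper⟩
  have h12 := per12_reduce p N hp (fun q hq => hper q hq)
  set K := N with hKdef
  have hNle : N ≤ pos12 (2 ^ K) := by
    have h2K : K < 2 ^ K := Nat.lt_two_pow_self (n := K)
    calc N ≤ 2 ^ K := by omega
      _ ≤ 12 * 2 ^ K := by omega
      _ ≤ pos12 (2 ^ K) := pre12_len_ge c12 _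
  have hb : pre12 c12 (2 ^ K + 1) = pre12 c12 (2 ^ K) ++ y12 := by
    show pre12 c12 (2 ^ K) ++ _ = _
    rw [c12_pow K]; simp
  have hv1 : w12 (pos12 (2 ^ K) + 1) = 1 := by
    rw [blk_content (2 ^ K) 1 y12 hb (by simp [y12])]
    exact y12_vals.1
  have hv13 : w12 (pos12 (2 ^ K) + 13) = 0 := by
    rw [blk_content (2 ^ K) 13 y12 hb (by simp [y12])]
    exact y12_vals.2
  have := h12 (pos12 (2 ^ K) + 1) (by omega)
  rw [show pos12 (2 ^ K) + 1 + 12 = pos12 (2 ^ K) + 13 by omega, hv13, hv1] at this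
  exact absurd this (by norm_num)

/-- Every factor of length at least 15 of any word in `{x,y}^ω` has an abelian border
of length at most 14; in particular there is an aperiodic word all of whose factors of
length at least 15 are abelian bordered. -/
theorem stmt_12 :
    (∀ w : ℕ → ℕ, WordIn12 w → ∀ i n, 15 ≤ n →
      ∃ k, k ≤ 14 ∧ HasAbelianBorderOfLength (factor w i n) k) ∧
    (∃ w : ℕ → ℕ, ¬ UltimatelyPeriodic w ∧
      ∀ i n, 15 ≤ n → AbelianBordered (factor w i n)) := by
  refine ⟨part1, ⟨w12, w12_not_periodic, ?_⟩⟩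
  intro i n h15
  obtain ⟨k, _, hk⟩ := part1 w12 ⟨c12, word_in_w12⟩ i n h15
  exact ⟨k, hk⟩
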